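/- Mixed-norm Marcinkiewicz interpolation: let T be a sublinear operator from L^{p₀}(ℝ, L^∞(ℝ)) + L^{p₁}(ℝ, L^∞(ℝ)) to measurable functions on ℝ², with 1 ≤ p₀ < p₁ < ∞. Assume ‖‖Tf(x,y)‖_{L^{p₀,∞}_x}‖_{L^∞_y} ≤ A₀ ‖‖f(x,y)‖_{L^∞_y}‖_{L^{p₀}_x} and ‖‖Tf(x,y)‖_{L^{p₁,∞}_x}‖_{L^∞_y} ≤ A₁ ‖‖f(x,y)‖_{L^∞_y}‖_{L^{p₁}_x} for all f. Then for every p₀ < p < p₁, ‖‖Tf(x,y)‖_{L^p_x}‖_{L^∞_y} ≤ (p((2A₀)^{p₀}/(p−p₀) + (2A₁)^{p₁}/(p₁−p)))^{1/p} ‖‖f(x,y)‖_{L^∞_y}‖_{L^p_x}. -/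

import Mathlib

open MeasureTheory
open scoped ENNReal NNReal

/-- The weak-`L^p` quasinorm on `ℝ`: `sup_{t>0} t · |{x : |g x| > t}|^{1/p}`. -/
noncomputable def weakNorm (g : ℝ → ℂ) (p : ℝ) : ℝ≥0∞ :=
  ⨆ t : ℝ≥0, (t : ℝ≥0∞) * volume {x : ℝ | (t : ℝ) < ‖g x‖} ^ (1 / p)

open Set

namespace MixedInterpAux

variable {α : Type*} [MeasurableSpace α] {μ : Measure α}

/-- If `h` is a measurable minorant of `u` with the same (finite) lower integral, then any
measurable minorant `ψ` of `u` is a.e. bounded by `h`. -/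
lemma ae_le_of_meas_minorant {u h ψ : α → ℝ≥0∞} (hh : Measurable h) (hle : ∀ x, h x ≤ u x)
    (heq : ∫⁻ x, u x ∂μ = ∫⁻ x, h x ∂μ) (hfin : ∫⁻ x, h x ∂μ ≠ ∞)
    (hψ : Measurable ψ) (hψle : ∀ x, ψ x ≤ u x) : ∀ᵐ x ∂μ, ψ x ≤ h x := by
  set χ := fun x => max (ψ x) (h x) with hχ
  have hχm : Measurable χ := hψ.max hh
  have hχle : ∀ x, h x ≤ χ x := fun x => le_max_right _ _
  have h2 : ∫⁻ x, χ x ∂μ = ∫⁻ x, h x ∂μ :=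
    le_antisymm (heq ▸ lintegral_mono fun x => max_le (hψle x) (hle x)) (lintegral_mono hχle)
  have key : ∫⁻ x, χ x - h x ∂μ = 0 := by
    have hadd : ∫⁻ x, χ x - h x ∂μ + ∫⁻ x, h x ∂μ ≤ 0 + ∫⁻ x, h x ∂μ := by
      rw [zero_add]
      calc ∫⁻ x, χ x - h x ∂μ + ∫⁻ x, h x ∂μ ≤ ∫⁻ x, (χ x - h x) + h x ∂μ :=
            le_lintegral_add _ _
        _ = ∫⁻ x, χ x ∂μ := by
            apply lintegral_congr fun x => ?_
            exact tsub_add_cancel_of_le (hχle x)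
        _ = ∫⁻ x, h x ∂μ := h2
    exact le_antisymm ((ENNReal.add_le_add_iff_right hfin).mp hadd) zero_le
  have hz : ∀ᵐ x ∂μ, χ x - h x = 0 := (lintegral_eq_zero_iff (hχm.sub hh)).mp key
  filter_upwards [hz] with x hx
  have : χ x ≤ h x := tsub_eq_zero_iff_le.mp hx
  exact le_trans (le_max_left _ _) this

/-- Localized domination: if `h ≤ u` is a measurable minorant with equal finite lower integral,
then for every `θ > 0` and measurable `E`, `∫⁻_E u^θ ≤ ∫⁻_E h^θ`. -/
lemma lintegral_rpow_restrict_le {u h : α → ℝ≥0∞} (hh : Measurable h) (hle : ∀ x, h x ≤ u x)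
    (heq : ∫⁻ x, u x ∂μ = ∫⁻ x, h x ∂μ) (hfin : ∫⁻ x, h x ∂μ ≠ ∞)
    {θ : ℝ} (hθ : 0 < θ) {E : Set α} (hE : MeasurableSet E) :
    ∫⁻ x in E, u x ^ θ ∂μ ≤ ∫⁻ x in E, h x ^ θ ∂μ := by
  rw [← lintegral_indicator hE, ← lintegral_indicator hE]
  obtain ⟨φ, hφm, hφle, hφeq⟩ :=
    exists_measurable_le_lintegral_eq μ (E.indicator fun x => u x ^ θ)
  rw [hφeq]
  have hrpow_id : ∀ a : ℝ≥0∞, (a ^ θ) ^ (1/θ) = a := fun a => by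
    rw [← ENNReal.rpow_mul, mul_one_div, div_self hθ.ne', ENNReal.rpow_one]
  have hrpow_id' : ∀ a : ℝ≥0∞, (a ^ (1/θ)) ^ θ = a := fun a => by
    rw [← ENNReal.rpow_mul, one_div, inv_mul_cancel₀ hθ.ne', ENNReal.rpow_one]
  set ψ := fun x => φ x ^ (1/θ) with hψdef
  have hψm : Measurable ψ := hφm.pow_const _
  have hψle : ∀ x, ψ x ≤ u x := by
    intro x
    calc φ x ^ (1/θ) ≤ (E.indicator (fun x => u x ^ θ) x) ^ (1/θ) :=
          ENNReal.rpow_le_rpow (hφle x) (by positivity)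
      _ ≤ (u x ^ θ) ^ (1/θ) := by
          apply ENNReal.rpow_le_rpow _ (by positivity)
          exact Set.indicator_le_self _ _ x
      _ = u x := hrpow_id _
  have hae : ∀ᵐ x ∂μ, ψ x ≤ h x :=
    ae_le_of_meas_minorant hh hle heq hfin hψm hψle
  have hφ0 : ∀ x ∉ E, φ x = 0 := by
    intro x hx
    have := hφle x
    rw [Set.indicator_of_notMem hx] at this
    exact le_antisymm this zero_le
  have : ∀ᵐ x ∂μ, φ x ≤ E.indicator (fun x => h x ^ θ) x := by
    filter_upwards [hae] with x hx
    by_cases hxE : x ∈ E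
    · rw [Set.indicator_of_mem hxE]
      calc φ x = (ψ x) ^ θ := (hrpow_id' _).symm
        _ ≤ h x ^ θ := ENNReal.rpow_le_rpow hx hθ.le
    · rw [Set.indicator_of_notMem hxE, hφ0 x hxE]
  exact lintegral_mono_ae this

/-- Extract a distribution-function bound from a weak norm bound. -/
lemma meas_lt_of_weakNorm_le {g : ℝ → ℂ} {r : ℝ} (hr : 0 < r) {R : ℝ≥0∞}
    (hw : (⨆ t : ℝ≥0, (t : ℝ≥0∞) * volume {x : ℝ | (t : ℝ) < ‖g x‖} ^ (1 / r)) ≤ R)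
    {s : ℝ≥0} (hs : 0 < s) :
    volume {x : ℝ | (s : ℝ) < ‖g x‖} ≤ (R / s) ^ r := by
  have h1 : (s : ℝ≥0∞) * volume {x : ℝ | (s : ℝ) < ‖g x‖} ^ (1/r) ≤ R :=
    le_trans (le_iSup (fun t : ℝ≥0 => (t : ℝ≥0∞) * volume {x : ℝ | (t : ℝ) < ‖g x‖} ^ (1 / r)) s) hw
  have h2 : volume {x : ℝ | (s : ℝ) < ‖g x‖} ^ (1/r) ≤ R / s := by
    rw [ENNReal.le_div_iff_mul_le (Or.inl (by exact_mod_cast hs.ne')) (Or.inl ENNReal.coe_ne_top),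
      mul_comm]
    exact h1
  calc volume {x : ℝ | (s : ℝ) < ‖g x‖}
      = (volume {x : ℝ | (s : ℝ) < ‖g x‖} ^ (1/r)) ^ r := by
        rw [← ENNReal.rpow_mul, one_div, inv_mul_cancel₀ hr.ne', ENNReal.rpow_one]
    _ ≤ (R / s) ^ r := ENNReal.rpow_le_rpow h2 hr.le

/-- `∫⁻ t in (0, a), t ^ (c-1) = a ^ c / c` for `c > 0`, `a ≥ 0`. -/
lemma lintegral_Ioo_rpow {a c : ℝ} (hc : 0 < c) (ha : 0 ≤ a) :
    ∫⁻ t in Ioo 0 a, ENNReal.ofReal (t ^ (c - 1)) = ENNReal.ofReal (a ^ c / c) := by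
  rcases eq_or_lt_of_le ha with rfl | ha'
  · simp [Real.zero_rpow hc.ne']
  have hint : IntervalIntegrable (fun t : ℝ => t ^ (c - 1)) volume 0 a :=
    intervalIntegral.intervalIntegrable_rpow' (by linarith)
  have hIoc : IntegrableOn (fun t : ℝ => t ^ (c - 1)) (Ioc 0 a) volume := by
    simpa [intervalIntegrable_iff, uIoc_of_le ha] using hint
  have hIoo : IntegrableOn (fun t : ℝ => t ^ (c - 1)) (Ioo 0 a) volume :=
    hIoc.mono_set Ioo_subset_Ioc_self
  rw [← ofReal_integral_eq_lintegral_ofReal hIoo]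
  · congr 1
    rw [← integral_Ioc_eq_integral_Ioo, ← intervalIntegral.integral_of_le ha,
      integral_rpow (Or.inl (by linarith))]
    rw [show c - 1 + 1 = c by ring, Real.zero_rpow hc.ne']
    ring
  · filter_upwards [self_mem_ae_restrict (measurableSet_Ioo : MeasurableSet (Ioo (0:ℝ) a))]
      with t ht
    exact Real.rpow_nonneg ht.1.le _

/-- `∫⁻ t in [a, ∞), t ^ (c-1) = a ^ c / (-c)` for `c < 0`, `a > 0`. -/
lemma lintegral_Ici_rpow {a c : ℝ} (hc : c < 0) (ha : 0 < a) :
    ∫⁻ t in Ici a, ENNReal.ofReal (t ^ (c - 1)) = ENNReal.ofReal (a ^ c / (-c)) := by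
  have hIoi : IntegrableOn (fun t : ℝ => t ^ (c - 1)) (Ioi a) volume :=
    integrableOn_Ioi_rpow_of_lt (by linarith) ha
  have hIci : volume.restrict (Ici a) = volume.restrict (Ioi a) :=
    (Measure.restrict_congr_set (Ioi_ae_eq_Ici)).symm
  rw [hIci, ← ofReal_integral_eq_lintegral_ofReal hIoi]
  · congr 1
    rw [integral_Ioi_rpow_of_lt (by linarith) ha]
    rw [show c - 1 + 1 = c by ring]
    rw [div_neg, neg_div]
  · filter_upwards [self_mem_ae_restrict (measurableSet_Ioi : MeasurableSet (Ioi a))] with t ht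
    exact Real.rpow_nonneg (le_trans ha.le (le_of_lt ht)) _

end MixedInterpAux

set_option maxHeartbeats 2000000 in
open MixedInterpAux Set in
/-- Mixed-norm Marcinkiewicz interpolation: a sublinear operator satisfying
mixed weak-type `(p₀, p₀)` and `(p₁, p₁)` estimates (sup in `y`, weak `L^{p}` in `x`)
satisfies the strong mixed estimate for each intermediate exponent `p₀ < p < p₁`,
with constant `(p((2A₀)^{p₀}/(p-p₀) + (2A₁)^{p₁}/(p₁-p)))^{1/p}`. -/
theorem mixed_norm_interpolation
    (T : (ℝ → ℝ → ℂ) → (ℝ → ℝ → ℂ))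
    (hsub : ∀ f g : ℝ → ℝ → ℂ, ∀ x y : ℝ,
      ‖T (f + g) x y‖ ≤ ‖T f x y‖ + ‖T g x y‖)
    (p₀ p₁ : ℝ) (hp₀ : 1 ≤ p₀) (hp₀₁ : p₀ < p₁)
    (A₀ A₁ : ℝ) (hA₀ : 0 < A₀) (hA₁ : 0 < A₁)
    (h₀ : ∀ f : ℝ → ℝ → ℂ,
      essSup (fun y : ℝ => weakNorm (fun x => T f x y) p₀) volume ≤
        ENNReal.ofReal A₀ *
          eLpNorm (fun x : ℝ =>
            (essSup (fun y : ℝ => (‖f x y‖₊ : ℝ≥0∞)) volume).toReal)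
            (ENNReal.ofReal p₀) volume)
    (h₁ : ∀ f : ℝ → ℝ → ℂ,
      essSup (fun y : ℝ => weakNorm (fun x => T f x y) p₁) volume ≤
        ENNReal.ofReal A₁ *
          eLpNorm (fun x : ℝ =>
            (essSup (fun y : ℝ => (‖f x y‖₊ : ℝ≥0∞)) volume).toReal)
            (ENNReal.ofReal p₁) volume) :
    ∀ p : ℝ, p₀ < p → p < p₁ → ∀ f : ℝ → ℝ → ℂ,
      essSup (fun y : ℝ => eLpNorm (fun x => T f x y) (ENNReal.ofReal p) volume) volume ≤
        ENNReal.ofReal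
            ((p * ((2 * A₀) ^ p₀ / (p - p₀) + (2 * A₁) ^ p₁ / (p₁ - p))) ^ (1 / p)) *
          eLpNorm (fun x : ℝ =>
            (essSup (fun y : ℝ => (‖f x y‖₊ : ℝ≥0∞)) volume).toReal)
            (ENNReal.ofReal p) volume := by
  classical
  intro p hpl hpr f
  have p₀pos : 0 < p₀ := lt_of_lt_of_le zero_lt_one hp₀
  have ppos : 0 < p := p₀pos.trans hpl
  have p₁pos : 0 < p₁ := ppos.trans hpr
  have hpp₀ : 0 < p - p₀ := sub_pos.mpr hpl
  have hp₁p : 0 < p₁ - p := sub_pos.mpr hpr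
  set K := p * ((2 * A₀) ^ p₀ / (p - p₀) + (2 * A₁) ^ p₁ / (p₁ - p)) with hK
  have hKpos : 0 < K := by
    apply mul_pos ppos
    have h1 : (0:ℝ) < (2*A₀) ^ p₀ := Real.rpow_pos_of_pos (by linarith) _
    have h2 : (0:ℝ) < (2*A₁) ^ p₁ := Real.rpow_pos_of_pos (by linarith) _
    positivity
  set G := fun x : ℝ => (essSup (fun y : ℝ => (‖f x y‖₊ : ℝ≥0∞)) volume).toReal with hGdef
  have hGnn : ∀ x, 0 ≤ G x := fun x => ENNReal.toReal_nonneg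
  set U := fun x : ℝ => ENNReal.ofReal (G x) with hUdef
  have hUlt : ∀ x, U x < ∞ := fun x => ENNReal.ofReal_lt_top
  set I := ∫⁻ x, U x ^ p with hIdef
  -- identify the eLpNorm of G
  have heLpG : eLpNorm G (ENNReal.ofReal p) volume = I ^ (1/p) := by
    rw [eLpNorm_eq_lintegral_rpow_enorm_toReal
        (by simp only [ne_eq, ENNReal.ofReal_eq_zero, not_le]; linarith) ENNReal.ofReal_ne_top,
      ENNReal.toReal_ofReal ppos.le]
    congr 1
    apply lintegral_congr fun x => ?_
    rw [Real.enorm_eq_ofReal (hGnn x)]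
  rw [heLpG]
  rcases eq_or_ne I ∞ with hItop | hIfin
  · rw [hItop, ENNReal.top_rpow_of_pos (by positivity), ENNReal.mul_top]
    · exact le_top
    · simp only [ne_eq, ENNReal.ofReal_eq_zero, not_le]
      exact Real.rpow_pos_of_pos hKpos _
  -- measurable minorant of U^p
  obtain ⟨h, hhm, hhle, hheq⟩ := exists_measurable_le_lintegral_eq volume (fun x => U x ^ p)
  have hfin : ∫⁻ x, h x ≠ ∞ := hheq ▸ hIfin
  have hhlt : ∀ x, h x < ∞ := fun x =>
    lt_of_le_of_lt (hhle x) (ENNReal.rpow_lt_top_of_nonneg ppos.le (hUlt x).ne)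
  -- the splitting sets
  set E := fun t : ℝ => {x : ℝ | ENNReal.ofReal (t ^ p) < h x} with hEdef
  have hEmeas : ∀ t, MeasurableSet (E t) := fun t => measurableSet_lt measurable_const hhm
  have hEanti : ∀ {s t : ℝ}, 0 ≤ s → s ≤ t → E t ⊆ E s := by
    intro s t hs hst x hx
    exact lt_of_le_of_lt (ENNReal.ofReal_le_ofReal (Real.rpow_le_rpow hs hst ppos.le)) hx
  set Φ₀ := fun t : ℝ => ∫⁻ x in E t, h x ^ (p₀/p) with hPhi0
  set Φ₁ := fun t : ℝ => ∫⁻ x in (E t)ᶜ, h x ^ (p₁/p) with hPhi1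
  have hPhi0anti : ∀ {s t : ℝ}, 0 ≤ s → s ≤ t → Φ₀ t ≤ Φ₀ s := fun hs hst =>
    lintegral_mono' (Measure.restrict_mono (hEanti hs hst) le_rfl) le_rfl
  have hPhi1mono : ∀ {s t : ℝ}, 0 ≤ s → s ≤ t → Φ₁ s ≤ Φ₁ t := fun hs hst =>
    lintegral_mono' (Measure.restrict_mono (compl_subset_compl.mpr (hEanti hs hst)) le_rfl) le_rfl
  -- splits of f
  set f₀ := fun t : ℝ => fun x y : ℝ => if ENNReal.ofReal (t ^ p) < h x then f x y else 0
    with hf₀def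
  set f₁ := fun t : ℝ => fun x y : ℝ => if ENNReal.ofReal (t ^ p) < h x then 0 else f x y
    with hf₁def
  have hsplit : ∀ t : ℝ, f = f₀ t + f₁ t := by
    intro t; funext x y
    simp only [hf₀def, hf₁def, Pi.add_apply]
    by_cases hc : ENNReal.ofReal (t ^ p) < h x <;> simp [hc]
  have habs : ∀ (t : ℝ) (x y : ℝ), ‖T f x y‖ ≤
      ‖T (f₀ t) x y‖ + ‖T (f₁ t) x y‖ := by
    intro t x y
    have := hsub (f₀ t) (f₁ t) x y
    rwa [← hsplit t] at this
  -- the key weak-type bounds for each split level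
  have hweak₀ : ∀ t : ℝ, 0 < t →
      (∀ᵐ y : ℝ ∂volume, volume {x : ℝ | t/2 < ‖T (f₀ t) x y‖} ≤
        ENNReal.ofReal ((2*A₀/t) ^ p₀) * Φ₀ t) := by
    intro t ht
    have hb := h₀ (f₀ t)
    have hfun : (fun x : ℝ => (essSup (fun y : ℝ => (‖f₀ t x y‖₊ : ℝ≥0∞)) volume).toReal)
        = fun x : ℝ => if ENNReal.ofReal (t ^ p) < h x then G x else 0 := by
      funext x
      by_cases hc : ENNReal.ofReal (t ^ p) < h x
      · simp only [hf₀def, if_pos hc, hGdef]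
      · simp only [hf₀def, if_neg hc, nnnorm_zero, ENNReal.coe_zero]
        rw [le_antisymm (essSup_le_of_ae_le 0 (Filter.Eventually.of_forall fun _ => le_rfl))
          zero_le]
        simp
    rw [hfun] at hb
    have heL : eLpNorm (fun x : ℝ => if ENNReal.ofReal (t ^ p) < h x then G x else 0)
        (ENNReal.ofReal p₀) volume ≤ Φ₀ t ^ (1/p₀) := by
      rw [eLpNorm_eq_lintegral_rpow_enorm_toReal
          (by simp only [ne_eq, ENNReal.ofReal_eq_zero, not_le]; linarith) ENNReal.ofReal_ne_top,
        ENNReal.toReal_ofReal p₀pos.le]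
      apply ENNReal.rpow_le_rpow _ (by positivity)
      calc ∫⁻ x, ‖if ENNReal.ofReal (t ^ p) < h x then G x else 0‖ₑ ^ p₀
          = ∫⁻ x in E t, (U x ^ p) ^ (p₀/p) := by
            rw [← lintegral_indicator (hEmeas t)]
            apply lintegral_congr fun x => ?_
            by_cases hc : ENNReal.ofReal (t ^ p) < h x
            · have hmem : x ∈ E t := by rw [hEdef]; exact hc
              rw [Set.indicator_of_mem hmem, if_pos hc, Real.enorm_eq_ofReal (hGnn x),
                ← ENNReal.rpow_mul, mul_div_cancel₀ _ ppos.ne']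
            · have hmem : x ∉ E t := by rw [hEdef]; exact hc
              rw [Set.indicator_of_notMem hmem, if_neg hc]
              simp [ENNReal.zero_rpow_of_pos p₀pos]
        _ ≤ Φ₀ t :=
            lintegral_rpow_restrict_le hhm hhle hheq hfin (by positivity) (hEmeas t)
    have hR : essSup (fun y : ℝ => weakNorm (fun x => T (f₀ t) x y) p₀) volume ≤
        ENNReal.ofReal A₀ * Φ₀ t ^ (1/p₀) := le_trans hb (mul_le_mul_right heL _)
    filter_upwards [ENNReal.ae_le_essSup (fun y : ℝ => weakNorm (fun x => T (f₀ t) x y) p₀)] with y hy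
    have hwn := hy.trans hR
    unfold weakNorm at hwn
    have hs : (0:ℝ≥0) < (t/2).toNNReal := Real.toNNReal_pos.mpr (by linarith)
    have hext := meas_lt_of_weakNorm_le p₀pos hwn hs
    rw [Real.coe_toNNReal _ (by linarith : (0:ℝ) ≤ t/2)] at hext
    refine le_trans hext (le_of_eq ?_)
    have hcoe : ((Real.toNNReal (t/2) : ℝ≥0) : ℝ≥0∞) = ENNReal.ofReal (t/2) := rfl
    rw [hcoe, ENNReal.div_rpow_of_nonneg _ _ p₀pos.le, ENNReal.mul_rpow_of_nonneg _ _ p₀pos.le,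
      ← ENNReal.rpow_mul, one_div, inv_mul_cancel₀ p₀pos.ne', ENNReal.rpow_one]
    have hconst : ENNReal.ofReal ((2*A₀/t) ^ p₀)
        = ENNReal.ofReal A₀ ^ p₀ / ENNReal.ofReal (t/2) ^ p₀ := by
      rw [ENNReal.ofReal_rpow_of_pos hA₀, ENNReal.ofReal_rpow_of_pos (by linarith : 0 < t/2),
        ← ENNReal.ofReal_div_of_pos (Real.rpow_pos_of_pos (by linarith) _),
        ← Real.div_rpow hA₀.le (by linarith : (0:ℝ) ≤ t/2)]
      congr 2
      field_simp
    rw [hconst]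
    simp only [div_eq_mul_inv]
    ring
  have hweak₁ : ∀ t : ℝ, 0 < t →
      (∀ᵐ y : ℝ ∂volume, volume {x : ℝ | t/2 < ‖T (f₁ t) x y‖} ≤
        ENNReal.ofReal ((2*A₁/t) ^ p₁) * Φ₁ t) := by
    intro t ht
    have hb := h₁ (f₁ t)
    have hfun : (fun x : ℝ => (essSup (fun y : ℝ => (‖f₁ t x y‖₊ : ℝ≥0∞)) volume).toReal)
        = fun x : ℝ => if ENNReal.ofReal (t ^ p) < h x then 0 else G x := by
      funext x
      by_cases hc : ENNReal.ofReal (t ^ p) < h x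
      · simp only [hf₁def, if_pos hc, nnnorm_zero, ENNReal.coe_zero]
        rw [le_antisymm (essSup_le_of_ae_le 0 (Filter.Eventually.of_forall fun _ => le_rfl))
          zero_le]
        simp
      · simp only [hf₁def, if_neg hc, hGdef]
    rw [hfun] at hb
    have heL : eLpNorm (fun x : ℝ => if ENNReal.ofReal (t ^ p) < h x then 0 else G x)
        (ENNReal.ofReal p₁) volume ≤ Φ₁ t ^ (1/p₁) := by
      rw [eLpNorm_eq_lintegral_rpow_enorm_toReal
          (by simp only [ne_eq, ENNReal.ofReal_eq_zero, not_le]; linarith) ENNReal.ofReal_ne_top,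
        ENNReal.toReal_ofReal p₁pos.le]
      apply ENNReal.rpow_le_rpow _ (by positivity)
      calc ∫⁻ x, ‖if ENNReal.ofReal (t ^ p) < h x then 0 else G x‖ₑ ^ p₁
          = ∫⁻ x in (E t)ᶜ, (U x ^ p) ^ (p₁/p) := by
            rw [← lintegral_indicator (hEmeas t).compl]
            apply lintegral_congr fun x => ?_
            by_cases hc : ENNReal.ofReal (t ^ p) < h x
            · have hmem : x ∉ (E t)ᶜ := by rw [hEdef]; exact fun hx => hx hc
              rw [Set.indicator_of_notMem hmem, if_pos hc]
              simp [ENNReal.zero_rpow_of_pos p₁pos]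
            · have hmem : x ∈ (E t)ᶜ := by rw [hEdef]; exact hc
              rw [Set.indicator_of_mem hmem, if_neg hc,
                Real.enorm_eq_ofReal (hGnn x), ← ENNReal.rpow_mul,
                mul_div_cancel₀ _ ppos.ne']
        _ ≤ Φ₁ t :=
            lintegral_rpow_restrict_le hhm hhle hheq hfin (by positivity) (hEmeas t).compl
    have hR : essSup (fun y : ℝ => weakNorm (fun x => T (f₁ t) x y) p₁) volume ≤
        ENNReal.ofReal A₁ * Φ₁ t ^ (1/p₁) := le_trans hb (mul_le_mul_right heL _)
    filter_upwards [ENNReal.ae_le_essSup (fun y : ℝ => weakNorm (fun x => T (f₁ t) x y) p₁)] with y hy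
    have hwn := hy.trans hR
    unfold weakNorm at hwn
    have hs : (0:ℝ≥0) < (t/2).toNNReal := Real.toNNReal_pos.mpr (by linarith)
    have hext := meas_lt_of_weakNorm_le p₁pos hwn hs
    rw [Real.coe_toNNReal _ (by linarith : (0:ℝ) ≤ t/2)] at hext
    refine le_trans hext (le_of_eq ?_)
    have hcoe : ((Real.toNNReal (t/2) : ℝ≥0) : ℝ≥0∞) = ENNReal.ofReal (t/2) := rfl
    rw [hcoe, ENNReal.div_rpow_of_nonneg _ _ p₁pos.le, ENNReal.mul_rpow_of_nonneg _ _ p₁pos.le,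
      ← ENNReal.rpow_mul, one_div, inv_mul_cancel₀ p₁pos.ne', ENNReal.rpow_one]
    have hconst : ENNReal.ofReal ((2*A₁/t) ^ p₁)
        = ENNReal.ofReal A₁ ^ p₁ / ENNReal.ofReal (t/2) ^ p₁ := by
      rw [ENNReal.ofReal_rpow_of_pos hA₁, ENNReal.ofReal_rpow_of_pos (by linarith : 0 < t/2),
        ← ENNReal.ofReal_div_of_pos (Real.rpow_pos_of_pos (by linarith) _),
        ← Real.div_rpow hA₁.le (by linarith : (0:ℝ) ≤ t/2)]
      congr 2
      field_simp
    rw [hconst]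
    simp only [div_eq_mul_inv]
    ring
  have hdist : ∀ᵐ y : ℝ ∂volume, ∀ t : ℝ, 0 < t →
      volume {x : ℝ | t < ‖T f x y‖} ≤
        ENNReal.ofReal ((2*A₀/t) ^ p₀) * Φ₀ t + ENNReal.ofReal ((2*A₁/t) ^ p₁) * Φ₁ t := by
    have hae : ∀ᵐ y : ℝ ∂volume, ∀ q : ℚ, 0 < (q:ℝ) →
        (volume {x : ℝ | (q:ℝ)/2 < ‖T (f₀ (q:ℝ)) x y‖} ≤
            ENNReal.ofReal ((2*A₀/(q:ℝ)) ^ p₀) * Φ₀ (q:ℝ) ∧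
         volume {x : ℝ | (q:ℝ)/2 < ‖T (f₁ (q:ℝ)) x y‖} ≤
            ENNReal.ofReal ((2*A₁/(q:ℝ)) ^ p₁) * Φ₁ (q:ℝ)) := by
      rw [MeasureTheory.ae_all_iff]
      intro q
      by_cases hq : 0 < (q:ℝ)
      · filter_upwards [hweak₀ q hq, hweak₁ q hq] with y hy1 hy2 _
        exact ⟨hy1, hy2⟩
      · filter_upwards with y hq'
        exact absurd hq' hq
    filter_upwards [hae] with y hy
    intro t ht
    -- per-rational bound, uniform in an auxiliary rational `r`
    have hqb : ∀ q : ℚ, t < (q:ℝ) → ∀ r : ℚ, t < (r:ℝ) →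
        volume {x : ℝ | (q:ℝ) < ‖T f x y‖} ≤
          ENNReal.ofReal ((2*A₀/t) ^ p₀) * Φ₀ t
            + ENNReal.ofReal ((2*A₁/t) ^ p₁) * Φ₁ (r:ℝ) := by
      intro q hq r hr
      set m : ℚ := min q r with hm
      have hmq : (m:ℝ) ≤ (q:ℝ) := by exact_mod_cast min_le_left q r
      have hmr : (m:ℝ) ≤ (r:ℝ) := by exact_mod_cast min_le_right q r
      have hmt : t < (m:ℝ) := by
        rcases min_cases q r with ⟨hc, _⟩ | ⟨hc, _⟩ <;> rw [hm, hc]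
        · exact hq
        · exact hr
      have hmpos : 0 < (m:ℝ) := ht.trans hmt
      have hsubset : {x : ℝ | (q:ℝ) < ‖T f x y‖} ⊆
          {x : ℝ | (m:ℝ)/2 < ‖T (f₀ (m:ℝ)) x y‖} ∪
          {x : ℝ | (m:ℝ)/2 < ‖T (f₁ (m:ℝ)) x y‖} := by
        intro x hx
        simp only [Set.mem_setOf_eq] at hx
        by_contra hcon
        have hA : ¬ ((m:ℝ)/2 < ‖T (f₀ (m:ℝ)) x y‖) :=
          fun hh => hcon (Or.inl hh)
        have hB : ¬ ((m:ℝ)/2 < ‖T (f₁ (m:ℝ)) x y‖) :=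
          fun hh => hcon (Or.inr hh)
        push_neg at hA hB
        have h2 := habs (m:ℝ) x y
        have : ‖T f x y‖ ≤ (m:ℝ) := by linarith
        linarith
      calc volume {x : ℝ | (q:ℝ) < ‖T f x y‖}
          ≤ volume ({x : ℝ | (m:ℝ)/2 < ‖T (f₀ (m:ℝ)) x y‖} ∪
              {x : ℝ | (m:ℝ)/2 < ‖T (f₁ (m:ℝ)) x y‖}) := measure_mono hsubset
        _ ≤ volume {x : ℝ | (m:ℝ)/2 < ‖T (f₀ (m:ℝ)) x y‖} +
              volume {x : ℝ | (m:ℝ)/2 < ‖T (f₁ (m:ℝ)) x y‖} := measure_union_le _ _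
        _ ≤ ENNReal.ofReal ((2*A₀/(m:ℝ)) ^ p₀) * Φ₀ (m:ℝ)
              + ENNReal.ofReal ((2*A₁/(m:ℝ)) ^ p₁) * Φ₁ (m:ℝ) :=
            add_le_add (hy m hmpos).1 (hy m hmpos).2
        _ ≤ ENNReal.ofReal ((2*A₀/t) ^ p₀) * Φ₀ t
              + ENNReal.ofReal ((2*A₁/t) ^ p₁) * Φ₁ (r:ℝ) := by
            apply add_le_add
            · apply mul_le_mul'
              · apply ENNReal.ofReal_le_ofReal
                apply Real.rpow_le_rpow (by positivity)
                  (div_le_div_of_nonneg_left (by linarith) ht hmt.le) p₀pos.le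
              · exact hPhi0anti ht.le hmt.le
            · apply mul_le_mul'
              · apply ENNReal.ofReal_le_ofReal
                apply Real.rpow_le_rpow (by positivity)
                  (div_le_div_of_nonneg_left (by linarith) ht hmt.le) p₁pos.le
              · exact hPhi1mono hmpos.le hmr
    -- express the distribution set as a countable monotone union over rationals
    have hset : {x : ℝ | t < ‖T f x y‖} =
        ⋃ q : {q : ℚ // t < (q:ℝ)}, {x : ℝ | (q.1:ℝ) < ‖T f x y‖} := by
      ext x
      simp only [Set.mem_setOf_eq, Set.mem_iUnion]
      constructor
      · intro hx
        obtain ⟨q, hq1, hq2⟩ := exists_rat_btwn hx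
        exact ⟨⟨q, hq1⟩, hq2⟩
      · rintro ⟨⟨q, hq⟩, hx⟩
        exact hq.trans hx
    have hdir : Directed (· ⊆ ·) (fun q : {q : ℚ // t < (q:ℝ)} =>
        {x : ℝ | (q.1:ℝ) < ‖T f x y‖}) := by
      rintro ⟨q, hq⟩ ⟨r, hr⟩
      have hmt : t < ((min q r : ℚ):ℝ) := by
        rcases min_cases q r with ⟨hc, _⟩ | ⟨hc, _⟩ <;> rw [hc]
        · exact hq
        · exact hr
      refine ⟨⟨min q r, hmt⟩, ?_, ?_⟩
      · intro x hx
        simp only [Set.mem_setOf_eq] at hx ⊢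
        exact lt_of_le_of_lt (by exact_mod_cast min_le_left q r) hx
      · intro x hx
        simp only [Set.mem_setOf_eq] at hx ⊢
        exact lt_of_le_of_lt (by exact_mod_cast min_le_right q r) hx
    rw [hset, Directed.measure_iUnion hdir]
    apply iSup_le
    rintro ⟨q, hq⟩
    -- approximating sequence of rationals from above
    have hrat : ∀ n : ℕ, ∃ r : ℚ, t < (r:ℝ) ∧ (r:ℝ) < t + 1/(n+1) := by
      intro n
      exact exists_rat_btwn (lt_add_of_pos_right t (by positivity))
    choose rr hrr1 hrr2 using hrat
    set lev : ℕ → ℝ := fun n => t + 1/(n+1) with hlevdef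
    have hlevpos : ∀ n, 0 < lev n := fun n => by
      have : (0:ℝ) < 1/((n:ℝ)+1) := by positivity
      simp only [hlevdef]; linarith
    set g : ℕ → ℝ → ℝ≥0∞ :=
      fun n => ((E (lev n))ᶜ).indicator (fun x => h x ^ (p₁/p)) with hgdef
    have hgmeas : ∀ n, Measurable (g n) :=
      fun n => (hhm.pow_const _).indicator (hEmeas _).compl
    have hlevanti : ∀ {n m : ℕ}, n ≤ m → lev m ≤ lev n := by
      intro n m hnm
      simp only [hlevdef]
      have h1 : (1:ℝ)/((m:ℝ)+1) ≤ 1/((n:ℝ)+1) := by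
        apply div_le_div_of_nonneg_left zero_le_one (by positivity)
        exact_mod_cast add_le_add_left (Nat.cast_le.mpr hnm) 1
      linarith
    have hganti : Antitone g := by
      intro n m hnm x
      simp only [hgdef]
      apply Set.indicator_le_indicator_of_subset
      · exact compl_subset_compl.mpr (hEanti (hlevpos m).le (hlevanti hnm))
      · intro z; exact zero_le
    have hg_eq : ∀ n, ∫⁻ x, g n x = Φ₁ (lev n) := fun n => by
      rw [hgdef, hPhi1]
      exact lintegral_indicator (hEmeas _).compl _
    have hJfin : ∫⁻ x, g 0 x ≠ ∞ := by
      set c : ℝ≥0∞ := ENNReal.ofReal ((lev 0) ^ p) ^ ((p₁-p)/p) with hcdef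
      have hcne : c ≠ ∞ :=
        ENNReal.rpow_ne_top_of_nonneg (by positivity) ENNReal.ofReal_ne_top
      have hb : ∀ x, g 0 x ≤ c * h x := by
        intro x
        simp only [hgdef]
        by_cases hc : x ∈ (E (lev 0))ᶜ
        · rw [Set.indicator_of_mem hc]
          have hhx : h x ≤ ENNReal.ofReal ((lev 0) ^ p) := by
            have : ¬ (ENNReal.ofReal ((lev 0) ^ p) < h x) := by
              rw [hEdef] at hc; exact hc
            exact not_lt.mp this
          calc h x ^ (p₁/p) = h x ^ ((p₁-p)/p + 1) := by
                congr 1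
                field_simp
                ring
            _ = h x ^ ((p₁-p)/p) * h x ^ (1:ℝ) :=
                ENNReal.rpow_add_of_nonneg _ _ (by positivity) zero_le_one
            _ = h x ^ ((p₁-p)/p) * h x := by rw [ENNReal.rpow_one]
            _ ≤ c * h x := by
                apply mul_le_mul_left
                exact ENNReal.rpow_le_rpow hhx (by positivity)
        · rw [Set.indicator_of_notMem hc]; exact zero_le
      have : ∫⁻ x, g 0 x ≤ c * ∫⁻ x, h x := by
        calc ∫⁻ x, g 0 x ≤ ∫⁻ x, c * h x := lintegral_mono hb
          _ = c * ∫⁻ x, h x := lintegral_const_mul' _ _ hcne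
      exact ne_top_of_le_ne_top (ENNReal.mul_ne_top hcne hfin) this
    have hJinf : ⨅ n, ∫⁻ x, g n x ≤ Φ₁ t := by
      rw [← lintegral_iInf hgmeas hganti hJfin]
      have hPhi1t : Φ₁ t = ∫⁻ x, ((E t)ᶜ).indicator (fun x => h x ^ (p₁/p)) x := by
        rw [hPhi1]
        exact (lintegral_indicator (hEmeas t).compl _).symm
      rw [hPhi1t]
      apply lintegral_mono fun x => ?_
      by_cases hc : x ∈ (E t)ᶜ
      · rw [Set.indicator_of_mem hc]
        exact le_trans (iInf_le _ 0) (by simp only [hgdef]; exact Set.indicator_le_self _ _ x)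
      · rw [Set.indicator_of_notMem hc]
        have hcx : ENNReal.ofReal (t ^ p) < h x := by
          rw [Set.notMem_compl_iff] at hc
          rw [hEdef] at hc; exact hc
        have hbpos : t ^ p < (h x).toReal := by
          rw [← ENNReal.ofReal_lt_iff_lt_toReal (by positivity) (hhlt x).ne]
          exact hcx
        have htb : t < (h x).toReal ^ (1/p) := by
          have h1 : (t ^ p) ^ (1/p) < ((h x).toReal) ^ (1/p) :=
            Real.rpow_lt_rpow (by positivity) hbpos (by positivity)
          rwa [← Real.rpow_mul ht.le, mul_one_div, div_self ppos.ne',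
            Real.rpow_one] at h1
        obtain ⟨n, hn⟩ := exists_nat_one_div_lt (sub_pos.mpr htb)
        refine le_trans (iInf_le _ n) (le_of_eq ?_)
        have hlevlt : lev n < (h x).toReal ^ (1/p) := by
          simp only [hlevdef]; linarith
        have hmem : x ∈ E (lev n) := by
          rw [hEdef]
          show ENNReal.ofReal ((lev n) ^ p) < h x
          have h1 : (lev n) ^ p < (h x).toReal := by
            have h2 : (lev n) ^ p < ((h x).toReal ^ (1/p)) ^ p :=
              Real.rpow_lt_rpow (hlevpos n).le hlevlt ppos
            rwa [← Real.rpow_mul ENNReal.toReal_nonneg, one_div,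
              inv_mul_cancel₀ ppos.ne', Real.rpow_one] at h2
          calc ENNReal.ofReal ((lev n) ^ p) < ENNReal.ofReal ((h x).toReal) :=
                ENNReal.ofReal_lt_ofReal_iff_of_nonneg (by positivity) |>.mpr h1
            _ = h x := ENNReal.ofReal_toReal (hhlt x).ne
        simp only [hgdef]
        rw [Set.indicator_of_notMem (Set.notMem_compl_iff.mpr hmem)]
    -- combine
    have hbnd : ∀ n : ℕ, volume {x : ℝ | (q:ℝ) < ‖T f x y‖} ≤
        ENNReal.ofReal ((2*A₀/t) ^ p₀) * Φ₀ t
          + ENNReal.ofReal ((2*A₁/t) ^ p₁) * ∫⁻ x, g n x := by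
      intro n
      refine le_trans (hqb q hq (rr n) (hrr1 n)) (add_le_add_right ?_ _)
      apply mul_le_mul_right
      rw [hg_eq n]
      exact hPhi1mono (ht.trans (hrr1 n)).le (by
        have := hrr2 n
        simp only [hlevdef]
        linarith)
    have hc₁0 : ENNReal.ofReal ((2*A₁/t) ^ p₁) ≠ 0 := by
      simp only [ne_eq, ENNReal.ofReal_eq_zero, not_le]
      positivity
    calc volume {x : ℝ | (q:ℝ) < ‖T f x y‖}
        ≤ ⨅ n, (ENNReal.ofReal ((2*A₀/t) ^ p₀) * Φ₀ t
            + ENNReal.ofReal ((2*A₁/t) ^ p₁) * ∫⁻ x, g n x) := le_iInf hbnd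
      _ = ENNReal.ofReal ((2*A₀/t) ^ p₀) * Φ₀ t
            + ENNReal.ofReal ((2*A₁/t) ^ p₁) * ⨅ n, ∫⁻ x, g n x := by
          rw [ENNReal.mul_iInf_of_ne hc₁0 ENNReal.ofReal_ne_top, ENNReal.add_iInf]
      _ ≤ ENNReal.ofReal ((2*A₀/t) ^ p₀) * Φ₀ t
            + ENNReal.ofReal ((2*A₁/t) ^ p₁) * Φ₁ t :=
          add_le_add_right (mul_le_mul_right hJinf _) _
  -- Tonelli kernels
  set Q : ℝ → ℝ → ℝ≥0∞ := fun t x =>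
    if ENNReal.ofReal (t ^ p) < h x then h x ^ (p₀/p) * ENNReal.ofReal (t ^ (p - p₀ - 1)) else 0
    with hQdef
  set R : ℝ → ℝ → ℝ≥0∞ := fun t x =>
    if ENNReal.ofReal (t ^ p) < h x then 0 else h x ^ (p₁/p) * ENNReal.ofReal (t ^ (p - p₁ - 1))
    with hRdef
  have hprodmeas : MeasurableSet {z : ℝ × ℝ | ENNReal.ofReal (z.1 ^ p) < h z.2} :=
    measurableSet_lt ((measurable_fst.pow measurable_const).ennreal_ofReal)
      (hhm.comp measurable_snd)
  have hQmeas : Measurable (Function.uncurry Q) := by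
    apply Measurable.ite hprodmeas
    · exact ((hhm.comp measurable_snd).pow_const _).mul
        ((measurable_fst.pow measurable_const).ennreal_ofReal)
    · exact measurable_const
  have hRmeas : Measurable (Function.uncurry R) := by
    apply Measurable.ite hprodmeas
    · exact measurable_const
    · exact ((hhm.comp measurable_snd).pow_const _).mul
        ((measurable_fst.pow measurable_const).ennreal_ofReal)
  have hQ1 : ∀ t : ℝ, ∫⁻ x, Q t x = Φ₀ t * ENNReal.ofReal (t ^ (p - p₀ - 1)) := by
    intro t
    have hind : ∀ x, Q t x =
        (E t).indicator (fun x => h x ^ (p₀/p) * ENNReal.ofReal (t ^ (p - p₀ - 1))) x := by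
      intro x
      by_cases hc : ENNReal.ofReal (t ^ p) < h x
      · simp only [hQdef]
        rw [if_pos hc, Set.indicator_of_mem (show x ∈ E t by rw [hEdef]; exact hc)]
      · simp only [hQdef]
        rw [if_neg hc, Set.indicator_of_notMem (show x ∉ E t by rw [hEdef]; exact hc)]
    rw [lintegral_congr hind, lintegral_indicator (hEmeas t), hPhi0]
    exact lintegral_mul_const' _ _ ENNReal.ofReal_ne_top
  have hR1 : ∀ t : ℝ, ∫⁻ x, R t x = Φ₁ t * ENNReal.ofReal (t ^ (p - p₁ - 1)) := by
    intro t
    have hind : ∀ x, R t x =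
        ((E t)ᶜ).indicator (fun x => h x ^ (p₁/p) * ENNReal.ofReal (t ^ (p - p₁ - 1))) x := by
      intro x
      by_cases hc : ENNReal.ofReal (t ^ p) < h x
      · simp only [hRdef]
        rw [if_pos hc, Set.indicator_of_notMem
          (show x ∉ (E t)ᶜ by rw [hEdef]; exact fun hx => hx hc)]
      · simp only [hRdef]
        rw [if_neg hc, Set.indicator_of_mem (show x ∈ (E t)ᶜ by rw [hEdef]; exact hc)]
    rw [lintegral_congr hind, lintegral_indicator (hEmeas t).compl, hPhi1]
    exact lintegral_mul_const' _ _ ENNReal.ofReal_ne_top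
  -- inner integrals in t
  have hQ2 : ∀ x : ℝ, ∫⁻ t in Ioi (0:ℝ), Q t x = h x / ENNReal.ofReal (p - p₀) := by
    intro x
    set b := (h x).toReal ^ (1/p) with hbdef
    have hbnn : 0 ≤ b := Real.rpow_nonneg ENNReal.toReal_nonneg _
    have hcond : ∀ t : ℝ, 0 < t → (ENNReal.ofReal (t ^ p) < h x ↔ t < b) := by
      intro t ht
      rw [ENNReal.ofReal_lt_iff_lt_toReal (by positivity) (hhlt x).ne]
      constructor
      · intro h1
        have h2 := Real.rpow_lt_rpow (by positivity) h1 (show (0:ℝ) < 1/p by positivity)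
        rwa [← Real.rpow_mul ht.le, mul_one_div, div_self ppos.ne', Real.rpow_one] at h2
      · intro h1
        have h2 := Real.rpow_lt_rpow ht.le h1 ppos
        rwa [hbdef, ← Real.rpow_mul ENNReal.toReal_nonneg, one_div,
          inv_mul_cancel₀ ppos.ne', Real.rpow_one] at h2
    have hQind : ∀ᵐ t ∂(volume.restrict (Ioi (0:ℝ))), Q t x =
        (Ioo (0:ℝ) b).indicator (fun t => h x ^ (p₀/p) * ENNReal.ofReal (t ^ (p - p₀ - 1))) t := by
      filter_upwards [self_mem_ae_restrict measurableSet_Ioi] with t ht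
      simp only [hQdef]
      by_cases hc : ENNReal.ofReal (t ^ p) < h x
      · rw [if_pos hc, Set.indicator_of_mem (Set.mem_Ioo.mpr ⟨ht, (hcond t ht).mp hc⟩)]
      · rw [if_neg hc, Set.indicator_of_notMem
          (fun hmem => hc ((hcond t ht).mpr (Set.mem_Ioo.mp hmem).2))]
    rw [lintegral_congr_ae hQind, lintegral_indicator measurableSet_Ioo,
      Measure.restrict_restrict measurableSet_Ioo,
      inter_eq_self_of_subset_left Ioo_subset_Ioi_self,
      lintegral_const_mul' _ _ (ENNReal.rpow_ne_top_of_nonneg (by positivity) (hhlt x).ne),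
      lintegral_Ioo_rpow hpp₀ hbnn, ENNReal.ofReal_div_of_pos hpp₀]
    rw [← mul_div_assoc]
    congr 1
    rcases eq_or_ne (h x) 0 with hz | hz
    · have hb0 : b = 0 := by
        rw [hbdef, hz, ENNReal.toReal_zero]
        exact Real.zero_rpow (one_div_ne_zero ppos.ne')
      rw [hz, hb0, Real.zero_rpow hpp₀.ne']
      simp [ENNReal.zero_rpow_of_pos (show (0:ℝ) < p₀/p by positivity)]
    · have hxpos : 0 < (h x).toReal := ENNReal.toReal_pos hz (hhlt x).ne
      have hb0 : 0 < b := Real.rpow_pos_of_pos hxpos _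
      have hofb : ENNReal.ofReal b = h x ^ (1/p) := by
        rw [hbdef, ← ENNReal.ofReal_rpow_of_pos hxpos, ENNReal.ofReal_toReal (hhlt x).ne]
      rw [← ENNReal.ofReal_rpow_of_pos hb0, hofb, ← ENNReal.rpow_mul,
        ← ENNReal.rpow_add_of_nonneg _ _ (by positivity) (by positivity)]
      rw [show p₀/p + 1/p * (p - p₀) = 1 by field_simp; ring, ENNReal.rpow_one]
  have hR2 : ∀ x : ℝ, ∫⁻ t in Ioi (0:ℝ), R t x = h x / ENNReal.ofReal (p₁ - p) := by
    intro x
    rcases eq_or_ne (h x) 0 with hz | hz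
    · have hzero : ∀ t : ℝ, R t x = 0 := by
        intro t
        simp only [hRdef]
        by_cases hc : ENNReal.ofReal (t ^ p) < h x
        · rw [if_pos hc]
        · rw [if_neg hc, hz, ENNReal.zero_rpow_of_pos (show (0:ℝ) < p₁/p by positivity),
            zero_mul]
      rw [lintegral_congr hzero, hz]
      simp
    have hxpos : 0 < (h x).toReal := ENNReal.toReal_pos hz (hhlt x).ne
    set b := (h x).toReal ^ (1/p) with hbdef
    have hb0 : 0 < b := Real.rpow_pos_of_pos hxpos _
    have hcond : ∀ t : ℝ, 0 < t → (ENNReal.ofReal (t ^ p) < h x ↔ t < b) := by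
      intro t ht
      rw [ENNReal.ofReal_lt_iff_lt_toReal (by positivity) (hhlt x).ne]
      constructor
      · intro h1
        have h2 := Real.rpow_lt_rpow (by positivity) h1 (show (0:ℝ) < 1/p by positivity)
        rwa [← Real.rpow_mul ht.le, mul_one_div, div_self ppos.ne', Real.rpow_one] at h2
      · intro h1
        have h2 := Real.rpow_lt_rpow ht.le h1 ppos
        rwa [hbdef, ← Real.rpow_mul ENNReal.toReal_nonneg, one_div,
          inv_mul_cancel₀ ppos.ne', Real.rpow_one] at h2
    have hRind : ∀ᵐ t ∂(volume.restrict (Ioi (0:ℝ))), R t x =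
        (Ici b).indicator (fun t => h x ^ (p₁/p) * ENNReal.ofReal (t ^ (p - p₁ - 1))) t := by
      filter_upwards [self_mem_ae_restrict measurableSet_Ioi] with t ht
      simp only [hRdef]
      by_cases hc : ENNReal.ofReal (t ^ p) < h x
      · rw [if_pos hc, Set.indicator_of_notMem
          (fun hmem => absurd ((hcond t ht).mp hc) (not_lt.mpr (Set.mem_Ici.mp hmem)))]
      · rw [if_neg hc, Set.indicator_of_mem (Set.mem_Ici.mpr
          (not_lt.mp (fun hlt => hc ((hcond t ht).mpr hlt))))]
    rw [lintegral_congr_ae hRind, lintegral_indicator measurableSet_Ici,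
      Measure.restrict_restrict measurableSet_Ici,
      inter_eq_self_of_subset_left (show Ici b ⊆ Ioi 0 from fun z hz' => lt_of_lt_of_le hb0 hz'),
      lintegral_const_mul' _ _ (ENNReal.rpow_ne_top_of_nonneg (by positivity) (hhlt x).ne),
      lintegral_Ici_rpow (show p - p₁ < 0 by linarith) hb0]
    rw [show -(p - p₁) = p₁ - p by ring, ENNReal.ofReal_div_of_pos hp₁p]
    rw [← mul_div_assoc]
    congr 1
    have hofb : ENNReal.ofReal b = h x ^ (1/p) := by
      rw [hbdef, ← ENNReal.ofReal_rpow_of_pos hxpos, ENNReal.ofReal_toReal (hhlt x).ne]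
    rw [← ENNReal.ofReal_rpow_of_pos hb0, hofb, ← ENNReal.rpow_mul,
      ← ENNReal.rpow_add _ _ hz (hhlt x).ne]
    rw [show p₁/p + 1/p * (p - p₁) = 1 by field_simp; ring, ENNReal.rpow_one]
  have hQint_meas : Measurable fun t : ℝ => ∫⁻ x, Q t x := hQmeas.lintegral_prod_right
  -- real exponent identities
  have hre₀ : ∀ t : ℝ, 0 < t → (2*A₀/t) ^ p₀ * t ^ (p-1) = (2*A₀) ^ p₀ * t ^ (p - p₀ - 1) := by
    intro t ht
    rw [Real.div_rpow (by linarith) ht.le, div_mul_eq_mul_div, mul_div_assoc,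
      ← Real.rpow_sub ht]
    congr 1
    ring
  have hre₁ : ∀ t : ℝ, 0 < t → (2*A₁/t) ^ p₁ * t ^ (p-1) = (2*A₁) ^ p₁ * t ^ (p - p₁ - 1) := by
    intro t ht
    rw [Real.div_rpow (by linarith) ht.le, div_mul_eq_mul_div, mul_div_assoc,
      ← Real.rpow_sub ht]
    congr 1
    ring
  -- pointwise rearrangement
  have hpt : ∀ t : ℝ, 0 < t →
      (ENNReal.ofReal ((2*A₀/t) ^ p₀) * Φ₀ t + ENNReal.ofReal ((2*A₁/t) ^ p₁) * Φ₁ t)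
        * ENNReal.ofReal (t ^ (p-1))
      = ENNReal.ofReal ((2*A₀) ^ p₀) * (∫⁻ x, Q t x)
        + ENNReal.ofReal ((2*A₁) ^ p₁) * (∫⁻ x, R t x) := by
    intro t ht
    rw [hQ1 t, hR1 t, add_mul]
    congr 1
    · have hac : ENNReal.ofReal ((2*A₀/t) ^ p₀) * ENNReal.ofReal (t ^ (p-1))
          = ENNReal.ofReal ((2*A₀) ^ p₀) * ENNReal.ofReal (t ^ (p - p₀ - 1)) := by
        rw [← ENNReal.ofReal_mul (by positivity), hre₀ t ht,
          ENNReal.ofReal_mul (by positivity)]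
      calc ENNReal.ofReal ((2*A₀/t) ^ p₀) * Φ₀ t * ENNReal.ofReal (t ^ (p-1))
          = ENNReal.ofReal ((2*A₀/t) ^ p₀) * ENNReal.ofReal (t ^ (p-1)) * Φ₀ t := by ring
        _ = ENNReal.ofReal ((2*A₀) ^ p₀) * ENNReal.ofReal (t ^ (p - p₀ - 1)) * Φ₀ t := by
            rw [hac]
        _ = ENNReal.ofReal ((2*A₀) ^ p₀) * (Φ₀ t * ENNReal.ofReal (t ^ (p - p₀ - 1))) := by ring
    · have hac : ENNReal.ofReal ((2*A₁/t) ^ p₁) * ENNReal.ofReal (t ^ (p-1))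
          = ENNReal.ofReal ((2*A₁) ^ p₁) * ENNReal.ofReal (t ^ (p - p₁ - 1)) := by
        rw [← ENNReal.ofReal_mul (by positivity), hre₁ t ht,
          ENNReal.ofReal_mul (by positivity)]
      calc ENNReal.ofReal ((2*A₁/t) ^ p₁) * Φ₁ t * ENNReal.ofReal (t ^ (p-1))
          = ENNReal.ofReal ((2*A₁/t) ^ p₁) * ENNReal.ofReal (t ^ (p-1)) * Φ₁ t := by ring
        _ = ENNReal.ofReal ((2*A₁) ^ p₁) * ENNReal.ofReal (t ^ (p - p₁ - 1)) * Φ₁ t := by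
            rw [hac]
        _ = ENNReal.ofReal ((2*A₁) ^ p₁) * (Φ₁ t * ENNReal.ofReal (t ^ (p - p₁ - 1))) := by ring
  -- the Tonelli bound
  have hTon : ∫⁻ t in Ioi (0:ℝ),
      (ENNReal.ofReal ((2*A₀/t) ^ p₀) * Φ₀ t + ENNReal.ofReal ((2*A₁/t) ^ p₁) * Φ₁ t)
        * ENNReal.ofReal (t ^ (p-1))
      = ENNReal.ofReal ((2*A₀) ^ p₀ / (p - p₀) + (2*A₁) ^ p₁ / (p₁ - p)) * I := by
    have hQswap : (∫⁻ t in Ioi (0:ℝ), (∫⁻ x, Q t x)) = I / ENNReal.ofReal (p - p₀) := by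
      rw [lintegral_lintegral_swap hQmeas.aemeasurable]
      rw [show (∫⁻ x, ∫⁻ t in Ioi (0:ℝ), Q t x) = ∫⁻ x, h x / ENNReal.ofReal (p - p₀) from
        lintegral_congr hQ2]
      simp_rw [div_eq_mul_inv]
      rw [lintegral_mul_const' _ _ (ENNReal.inv_ne_top.mpr (by
        simp only [ne_eq, ENNReal.ofReal_eq_zero, not_le]; exact hpp₀)), hIdef, hheq]
    have hRswap : (∫⁻ t in Ioi (0:ℝ), (∫⁻ x, R t x)) = I / ENNReal.ofReal (p₁ - p) := by
      rw [lintegral_lintegral_swap hRmeas.aemeasurable]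
      rw [show (∫⁻ x, ∫⁻ t in Ioi (0:ℝ), R t x) = ∫⁻ x, h x / ENNReal.ofReal (p₁ - p) from
        lintegral_congr hR2]
      simp_rw [div_eq_mul_inv]
      rw [lintegral_mul_const' _ _ (ENNReal.inv_ne_top.mpr (by
        simp only [ne_eq, ENNReal.ofReal_eq_zero, not_le]; exact hp₁p)), hIdef, hheq]
    calc ∫⁻ t in Ioi (0:ℝ),
        (ENNReal.ofReal ((2*A₀/t) ^ p₀) * Φ₀ t + ENNReal.ofReal ((2*A₁/t) ^ p₁) * Φ₁ t)
          * ENNReal.ofReal (t ^ (p-1))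
        = ∫⁻ t in Ioi (0:ℝ), (ENNReal.ofReal ((2*A₀) ^ p₀) * (∫⁻ x, Q t x)
            + ENNReal.ofReal ((2*A₁) ^ p₁) * (∫⁻ x, R t x)) := by
          apply lintegral_congr_ae
          filter_upwards [self_mem_ae_restrict measurableSet_Ioi] with t ht
          exact hpt t ht
      _ = ENNReal.ofReal ((2*A₀) ^ p₀) * (∫⁻ t in Ioi (0:ℝ), (∫⁻ x, Q t x))
            + ENNReal.ofReal ((2*A₁) ^ p₁) * (∫⁻ t in Ioi (0:ℝ), (∫⁻ x, R t x)) := by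
          rw [lintegral_add_left (hQint_meas.const_mul _),
            lintegral_const_mul' _ _ ENNReal.ofReal_ne_top,
            lintegral_const_mul' _ _ ENNReal.ofReal_ne_top]
      _ = ENNReal.ofReal ((2*A₀) ^ p₀) * (I / ENNReal.ofReal (p - p₀))
            + ENNReal.ofReal ((2*A₁) ^ p₁) * (I / ENNReal.ofReal (p₁ - p)) := by
          rw [hQswap, hRswap]
      _ = ENNReal.ofReal ((2*A₀) ^ p₀ / (p - p₀) + (2*A₁) ^ p₁ / (p₁ - p)) * I := by
          rw [ENNReal.ofReal_add (by positivity) (by positivity), add_mul,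
            ENNReal.ofReal_div_of_pos hpp₀, ENNReal.ofReal_div_of_pos hp₁p]
          simp only [div_eq_mul_inv]
          ring
  -- final a.e. bound
  have hfinal : ∀ᵐ y : ℝ ∂volume,
      eLpNorm (fun x => T f x y) (ENNReal.ofReal p) volume ≤
        ENNReal.ofReal (K ^ (1/p)) * I ^ (1/p) := by
    filter_upwards [hdist] with y hdy
    have heLpT : eLpNorm (fun x => T f x y) (ENNReal.ofReal p) volume
        = (∫⁻ x, (‖T f x y‖₊ : ℝ≥0∞) ^ p) ^ (1/p) := by
      rw [eLpNorm_eq_lintegral_rpow_enorm_toReal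
          (by simp only [ne_eq, ENNReal.ofReal_eq_zero, not_le]; linarith) ENNReal.ofReal_ne_top,
        ENNReal.toReal_ofReal ppos.le]
      rfl
    rw [heLpT]
    have hKK : (ENNReal.ofReal K * I) ^ (1/p) = ENNReal.ofReal (K ^ (1/p)) * I ^ (1/p) := by
      rw [ENNReal.mul_rpow_of_nonneg _ _ (by positivity), ENNReal.ofReal_rpow_of_pos hKpos]
    rw [← hKK]
    apply ENNReal.rpow_le_rpow _ (by positivity)
    obtain ⟨v, hvm, hvle, hveq⟩ :=
      exists_measurable_le_lintegral_eq volume (fun x => (‖T f x y‖₊ : ℝ≥0∞) ^ p)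
    rw [hveq]
    have hvlt : ∀ x, v x < ∞ := fun x =>
      lt_of_le_of_lt (hvle x) (ENNReal.rpow_lt_top_of_nonneg ppos.le ENNReal.coe_ne_top)
    set V := fun x => (v x ^ (1/p)).toReal with hVdef
    have hVm : Measurable V := (hvm.pow_const _).ennreal_toReal
    have hVnn : 0 ≤ᵐ[volume] V := Filter.Eventually.of_forall fun x => ENNReal.toReal_nonneg
    have hVval : ∀ x, ENNReal.ofReal (V x ^ p) = v x := by
      intro x
      have h1 : v x ^ (1/p) ≠ ∞ :=
        (ENNReal.rpow_lt_top_of_nonneg (by positivity) (hvlt x).ne).ne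
      simp only [hVdef]
      rw [← ENNReal.ofReal_rpow_of_nonneg ENNReal.toReal_nonneg ppos.le,
        ENNReal.ofReal_toReal h1, ← ENNReal.rpow_mul, one_div,
        inv_mul_cancel₀ ppos.ne', ENNReal.rpow_one]
    have hlc := lintegral_rpow_eq_lintegral_meas_lt_mul volume hVnn hVm.aemeasurable ppos
    have hveqV : ∫⁻ x, v x
        = ENNReal.ofReal p * ∫⁻ t in Ioi (0:ℝ),
            volume {a : ℝ | t < V a} * ENNReal.ofReal (t ^ (p-1)) := by
      rw [← hlc]
      exact lintegral_congr fun x => (hVval x).symm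
    rw [hveqV]
    have hVle : ∀ x, V x ≤ ‖T f x y‖ := by
      intro x
      have h2 : v x ^ (1/p) ≤ ((‖T f x y‖₊ : ℝ≥0∞)) := by
        calc v x ^ (1/p) ≤ ((‖T f x y‖₊ : ℝ≥0∞) ^ p) ^ (1/p) :=
              ENNReal.rpow_le_rpow (hvle x) (by positivity)
          _ = (‖T f x y‖₊ : ℝ≥0∞) := by
              rw [← ENNReal.rpow_mul, mul_one_div, div_self ppos.ne', ENNReal.rpow_one]
      have h3 := ENNReal.toReal_mono ENNReal.coe_ne_top h2
      rw [ENNReal.coe_toReal, coe_nnnorm] at h3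
      exact h3
    calc ENNReal.ofReal p * ∫⁻ t in Ioi (0:ℝ),
          volume {a : ℝ | t < V a} * ENNReal.ofReal (t ^ (p-1))
        ≤ ENNReal.ofReal p * ∫⁻ t in Ioi (0:ℝ),
            (ENNReal.ofReal ((2*A₀/t) ^ p₀) * Φ₀ t + ENNReal.ofReal ((2*A₁/t) ^ p₁) * Φ₁ t)
              * ENNReal.ofReal (t ^ (p-1)) := by
          apply mul_le_mul_right
          apply lintegral_mono_ae
          filter_upwards [self_mem_ae_restrict measurableSet_Ioi] with t ht
          apply mul_le_mul_left
          refine le_trans (measure_mono ?_) (hdy t ht)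
          intro x hx
          exact lt_of_lt_of_le hx (hVle x)
      _ ≤ ENNReal.ofReal p *
            (ENNReal.ofReal ((2*A₀) ^ p₀ / (p - p₀) + (2*A₁) ^ p₁ / (p₁ - p)) * I) :=
          mul_le_mul_right (le_of_eq hTon) _
      _ = ENNReal.ofReal K * I := by
          rw [← mul_assoc, ← ENNReal.ofReal_mul ppos.le, hK]
  exact essSup_le_of_ae_le _ hfinal
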